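/- Let n be odd and let Q0 be the distribution on n bits where X_1,...,X_{n-1} are IID uniform bits and X_n equals the sum of X_1,...,X_{n-1} modulo 2. Then Q0 is (n-1)-wise independent with marginal 1/2, and |Q0(Maj_n = 1) - 1/2| ≥ 1/(3√n). -/

import Mathlib

open Finset
open scoped Classical

/-- `Q` is a `k`-wise independent distribution on bits indexed by `ι`,
with each bit equal to `true` with probability `p`. -/
def kwise {ι : Type} [Fintype ι] [DecidableEq ι] (k : ℕ) (p : ℝ)
    (Q : (ι → Bool) → ℝ) : Prop :=
  (∀ x, 0 ≤ Q x) ∧ (∑ x, Q x = 1) ∧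
  ∀ S : Finset ι, S.card ≤ k → ∀ b : ι → Bool,
    (∑ x ∈ univ.filter (fun x => ∀ i ∈ S, x i = b i), Q x)
      = ∏ i ∈ S, (if b i then p else 1 - p)

/-- Probability of the event `E` under the distribution `Q`. -/
noncomputable def pr {ι : Type} [Fintype ι] [DecidableEq ι]
    (Q : (ι → Bool) → ℝ) (E : (ι → Bool) → Prop) : ℝ :=
  ∑ x, if E x then Q x else 0

/-- Number of bits equal to `true`. -/
def cnt {ι : Type} [Fintype ι] [DecidableEq ι] (x : ι → Bool) : ℕ :=
  (univ.filter (fun i => x i = true)).card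

/- ## Auxiliary lemmas -/

lemma sum_prod_bool {n : ℕ} (g : Fin n → Bool → ℝ) :
    ∑ x : Fin n → Bool, ∏ i, g i (x i) = ∏ i, (g i false + g i true) := by
  rw [← Fintype.piFinset_univ, ← Finset.prod_univ_sum]
  exact Finset.prod_congr rfl fun i _ => by simp [add_comm]

lemma card_cnt_eq {n k : ℕ} :
    ((univ : Finset (Fin n → Bool)).filter (fun x => (univ.filter (fun i => x i = true)).card = k)).card
      = n.choose k := by
  rw [← Fintype.card_subtype]
  have e : {x : Fin n → Bool // (univ.filter (fun i => x i = true)).card = k}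
      ≃ {s : Finset (Fin n) // s.card = k} := by
    refine ⟨fun x => ⟨univ.filter (fun i => x.1 i = true), x.2⟩,
      fun s => ⟨fun i => decide (i ∈ s.1), ?_⟩, fun x => ?_, fun s => ?_⟩
    · have : univ.filter (fun i => decide (i ∈ s.1) = true) = s.1 := by
        ext i; simp
      rw [this]; exact s.2
    · ext i; simp
    · ext i; simp
  rw [Fintype.card_congr e, Fintype.card_finset_len]
  simp

lemma sum_cnt_eq {n : ℕ} (f : ℕ → ℝ) :
    ∑ x : Fin n → Bool, f (cnt x) = ∑ k ∈ range (n+1), (n.choose k : ℝ) * f k := by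
  rw [← Finset.sum_fiberwise_of_maps_to (g := cnt) (t := range (n+1))
    (fun x _ => by
      simp only [mem_range, Nat.lt_succ_iff, cnt]
      exact (Finset.card_filter_le _ _).trans (by simp))]
  refine Finset.sum_congr rfl fun k _ => ?_
  rw [Finset.sum_congr rfl (fun x hx => by rw [(Finset.mem_filter.mp hx).2]),
    Finset.sum_const, nsmul_eq_mul]
  congr 1
  exact_mod_cast congrArg (Nat.cast (R := ℝ)) (by exact card_cnt_eq)

lemma alt_partial (N : ℕ) : ∀ j : ℕ, ∑ k ∈ range (j+1), (-1:ℝ)^k * ((N+1).choose k) = (-1)^j * (N.choose j) := by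
  intro j
  induction j with
  | zero => simp
  | succ j ih =>
    rw [Finset.sum_range_succ, ih, Nat.choose_succ_succ' N j]
    push_cast
    ring

lemma alt_full (m : ℕ) : ∑ k ∈ range (2*m+2), (-1:ℝ)^k * ((2*m+1).choose k) = 0 := by
  have h := Int.alternating_sum_range_choose (n := 2*m+1)
  rw [if_neg (by omega)] at h
  have : ((∑ k ∈ range (2*m+1+1), (-1:ℤ)^k * ((2*m+1).choose k) : ℤ) : ℝ) = 0 := by rw [h]; simp
  push_cast at this
  have e : 2*m+2 = 2*m+1+1 := by ring
  rw [e]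
  exact this

lemma centralBinom_lb : ∀ m : ℕ, 1 ≤ m → 16^m ≤ 4*m*(Nat.centralBinom m)^2 := by
  intro m
  induction m with
  | zero => omega
  | succ m ih =>
    intro _
    rcases Nat.eq_zero_or_pos m with h0 | hm
    · subst h0; simp [Nat.centralBinom]
    · have ih' := ih hm
      have key := Nat.succ_mul_centralBinom_succ m
      refine Nat.le_of_mul_le_mul_left ?_ (show 0 < m+1 by omega)
      calc (m+1) * 16^(m+1) = 16 * (m+1) * 16^m := by ring
        _ ≤ 16 * (m+1) * (4*m*(Nat.centralBinom m)^2) := Nat.mul_le_mul_left _ ih'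
        _ ≤ 16 * (2*m+1)^2 * (Nat.centralBinom m)^2 := by nlinarith [sq_nonneg (Nat.centralBinom m)]
        _ = 4 * (2*(2*m+1)*Nat.centralBinom m)^2 := by ring
        _ = 4 * ((m+1) * Nat.centralBinom (m+1))^2 := by rw [← key]
        _ = (m+1) * (4*(m+1)*(Nat.centralBinom (m+1))^2) := by ring

lemma sgn_eq {n : ℕ} (x : Fin n → Bool) :
    ∏ i, (if x i then (-1:ℝ) else 1) = (-1)^(cnt x) := by
  rw [← Finset.prod_filter_mul_prod_filter_not univ (fun i => x i = true)]
  rw [Finset.prod_congr rfl (fun i hi => if_pos (Finset.mem_filter.mp hi).2),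
      Finset.prod_congr rfl (fun i hi => if_neg (Finset.mem_filter.mp hi).2)]
  simp [cnt]

lemma Q0_agree_sum {n : ℕ} (S : Finset (Fin n)) (hS : S ≠ univ) (b : Fin n → Bool) :
    ∑ x ∈ univ.filter (fun x : Fin n → Bool => ∀ i ∈ S, x i = b i),
      (if Even (cnt x) then (1/2:ℝ)^(n-1) else 0) = (1/2)^S.card := by
  have hn1 : 1 ≤ n := by
    by_contra h
    exact hS (Finset.eq_univ_of_forall (fun i => absurd i.2 (by omega)))
  set c : ℝ := (1/2)^(n-1) with hc
  set a : Fin n → Bool → ℝ := fun i v => if i ∈ S then (if v = b i then 1 else 0) else 1 with ha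
  set e : Bool → ℝ := fun v => if v then (-1:ℝ) else 1 with he
  have key : ∀ x : Fin n → Bool,
      (if (∀ i ∈ S, x i = b i) then (if Even (cnt x) then c else 0) else 0)
      = c/2 * (∏ i, a i (x i)) + c/2 * (∏ i, a i (x i) * e (x i)) := by
    intro x
    have hA : (∏ i, a i (x i)) = if (∀ i ∈ S, x i = b i) then (1:ℝ) else 0 := by
      rw [← Finset.prod_filter_mul_prod_filter_not univ (fun i => i ∈ S)]
      simp only [ha]
      rw [Finset.prod_congr rfl (fun i hi => if_pos (Finset.mem_filter.mp hi).2),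
          Finset.prod_congr rfl (fun i hi => if_neg (Finset.mem_filter.mp hi).2)]
      rw [Finset.prod_boole]
      simp
    have hE : (∏ i, a i (x i) * e (x i)) = (∏ i, a i (x i)) * (-1)^(cnt x) := by
      rw [Finset.prod_mul_distrib, sgn_eq]
    rw [hE, hA]
    by_cases hag : (∀ i ∈ S, x i = b i)
    · rw [if_pos hag, if_pos hag]
      rcases Nat.even_or_odd (cnt x) with hev | hod
      · rw [if_pos hev, hev.neg_one_pow]; ring
      · rw [if_neg (Nat.not_even_iff_odd.mpr hod), hod.neg_one_pow]; ring
    · rw [if_neg hag, if_neg hag]; ring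
  rw [Finset.sum_filter, Finset.sum_congr rfl (fun x _ => key x), Finset.sum_add_distrib,
    ← Finset.mul_sum, ← Finset.mul_sum, sum_prod_bool a, sum_prod_bool (fun i v => a i v * e v)]
  have h1 : ∀ i, a i false + a i true = if i ∈ S then (1:ℝ) else 2 := by
    intro i
    by_cases hi : i ∈ S
    · simp only [ha, if_pos hi]; cases hb : b i <;> simp
    · simp [ha, hi]; norm_num
  have h2 : ∀ i, a i false * e false + a i true * e true = if i ∈ S then e (b i) else 0 := by
    intro i
    by_cases hi : i ∈ S
    · simp only [ha, he, if_pos hi]; cases hb : b i <;> simp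
    · simp [ha, he, hi]
  rw [Finset.prod_congr rfl (fun i _ => h1 i), Finset.prod_congr rfl (fun i _ => h2 i)]
  obtain ⟨j, hj⟩ : ∃ j, j ∉ S := by
    by_contra h
    push_neg at h
    exact hS (Finset.eq_univ_of_forall h)
  have hz : (∏ i, if i ∈ S then e (b i) else 0) = 0 :=
    Finset.prod_eq_zero (Finset.mem_univ j) (if_neg hj)
  rw [hz, mul_zero, add_zero]
  rw [← Finset.prod_filter_mul_prod_filter_not univ (fun i => i ∈ S)]
  rw [Finset.prod_congr rfl (fun i hi => if_pos (Finset.mem_filter.mp hi).2),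
      Finset.prod_congr rfl (fun i hi => if_neg (Finset.mem_filter.mp hi).2)]
  rw [Finset.prod_const, Finset.prod_const, one_pow, one_mul]
  have hcard : (univ.filter (fun i => i ∉ S)).card = n - S.card := by
    have h : (univ.filter (fun i => i ∉ S)) = Sᶜ := by ext i; simp
    rw [h, Finset.card_compl, Fintype.card_fin]
  rw [hcard]
  have hs : S.card ≤ n := by
    simpa using Finset.card_le_card (Finset.subset_univ S)
  have hns : n - 1 + 1 = n := by omega
  have e2 : (2:ℝ)^(n - S.card) = 2^n / 2^S.card := pow_sub₀ (2:ℝ) two_ne_zero hs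
  rw [e2, hc]
  have h3 : ((1:ℝ)/2)^(n-1)/2 = (1/2)^n := by
    rw [← hns, pow_succ, div_eq_mul_inv]
    norm_num
  rw [h3]
  rw [div_pow, div_pow, one_pow, one_pow]
  field_simp

/-- The XOR0 distribution (last bit is the parity of the first `n-1` IID uniform bits,
i.e. uniform on vectors with an even number of ones) is `(n-1)`-wise independent with
marginal `1/2`, and gives majority a probability at least `1/(3√n)` away from `1/2`. -/
theorem xor0_majority_bias (n : ℕ) (hn : Odd n)
    (Q0 : (Fin n → Bool) → ℝ)
    (hQ0 : Q0 = fun x => if Even (cnt x) then (1 / 2 : ℝ) ^ (n - 1) else 0) :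
    kwise (n - 1) (1 / 2 : ℝ) Q0 ∧
    |pr Q0 (fun x => 2 * cnt x > n) - 1 / 2| ≥ 1 / (3 * Real.sqrt n) := by
  obtain ⟨m, hm⟩ := hn
  have hm' : n = 2*m+1 := by omega
  subst hm'
  have hn1 : 1 ≤ 2*m+1 := by omega
  have hne : ∀ S : Finset (Fin (2*m+1)), S.card ≤ 2*m → S ≠ univ := by
    intro S hS h
    rw [h, Finset.card_univ, Fintype.card_fin] at hS
    omega
  constructor
  · refine ⟨fun x => by rw [hQ0]; dsimp only; split_ifs <;> positivity, ?_, ?_⟩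
    · have h := Q0_agree_sum (∅ : Finset (Fin (2*m+1))) (hne ∅ (by simp)) (fun _ => false)
      simp only [Finset.notMem_empty, IsEmpty.forall_iff, forall_const, Finset.filter_true_of_mem,
        Finset.mem_univ, Finset.card_empty, pow_zero] at h
      rw [hQ0]
      convert h using 2
    · intro S hScard b
      have h := Q0_agree_sum S (hne S (by simpa using hScard)) b
      rw [hQ0]
      have hrw : (∏ i ∈ S, (if b i then (1/2:ℝ) else 1 - 1/2)) = (1/2)^S.card := by
        rw [Finset.prod_congr rfl (fun i _ => show (if b i then (1/2:ℝ) else 1 - 1/2) = 1/2 by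
          cases b i <;> norm_num), Finset.prod_const]
      rw [hrw]
      convert h using 3
  · -- Part B
    set c : ℝ := (1/2)^(2*m+1-1) with hc
    set F : ℕ → ℝ := fun k => if 2*k > 2*m+1 then (if Even k then c else 0) else 0 with hF
    have hpr : pr Q0 (fun x => 2 * cnt x > 2*m+1) = ∑ k ∈ range (2*m+2), ((2*m+1).choose k : ℝ) * F k := by
      rw [pr, hQ0]
      refine (Finset.sum_congr rfl fun x _ => ?_).trans (sum_cnt_eq F)
      by_cases h : 2 * cnt x > 2*m+1 <;> simp [h, hF]
    have hsplit : ∑ k ∈ range (2*m+2), ((2*m+1).choose k : ℝ) * F k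
        = ∑ k ∈ Finset.Ico (m+1) (2*m+2), ((2*m+1).choose k : ℝ) * F k := by
      rw [Finset.range_eq_Ico, ← Finset.sum_Ico_consecutive _ (Nat.zero_le (m+1)) (by omega : m+1 ≤ 2*m+2)]
      have h0 : ∑ k ∈ Finset.Ico 0 (m+1), ((2*m+1).choose k : ℝ) * F k = 0 := by
        refine Finset.sum_eq_zero fun k hk => ?_
        have : ¬ (2*k > 2*m+1) := by
          simp only [Finset.mem_Ico] at hk; omega
        rw [hF]; simp only [if_neg this, mul_zero]
      rw [h0, zero_add]
    have hterm : ∀ k ∈ Finset.Ico (m+1) (2*m+2), ((2*m+1).choose k : ℝ) * F k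
        = c/2 * ((2*m+1).choose k : ℝ) + c/2 * ((-1:ℝ)^k * ((2*m+1).choose k : ℝ)) := by
      intro k hk
      have hgt : 2*k > 2*m+1 := by simp only [Finset.mem_Ico] at hk; omega
      rw [hF]
      simp only [if_pos hgt]
      rcases Nat.even_or_odd k with h | h
      · rw [if_pos h, h.neg_one_pow]; ring
      · rw [if_neg (Nat.not_even_iff_odd.mpr h), h.neg_one_pow]; ring
    have hA : ∑ k ∈ Finset.Ico (m+1) (2*m+2), ((2*m+1).choose k : ℝ) = 4^m := by
      have h1 : ∑ k ∈ range (2*m+2), ((2*m+1).choose k : ℝ) = 2^(2*m+1) := by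
        exact_mod_cast congrArg (Nat.cast (R := ℝ)) (Nat.sum_range_choose (2*m+1))
      have h2 : ∑ k ∈ range (m+1), ((2*m+1).choose k : ℝ) = 4^m := by
        exact_mod_cast congrArg (Nat.cast (R := ℝ)) (Nat.sum_range_choose_halfway m)
      have h3 : ∑ k ∈ range (m+1), ((2*m+1).choose k : ℝ)
          + ∑ k ∈ Finset.Ico (m+1) (2*m+2), ((2*m+1).choose k : ℝ)
          = ∑ k ∈ range (2*m+2), ((2*m+1).choose k : ℝ) := by
        rw [Finset.range_eq_Ico, Finset.range_eq_Ico]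
        exact Finset.sum_Ico_consecutive _ (Nat.zero_le (m+1)) (by omega : m+1 ≤ 2*m+2)
      have h4 : (2:ℝ)^(2*m+1) = 2 * 4^m := by
        rw [pow_succ, pow_mul]; norm_num; ring
      rw [h1, h2, h4] at h3
      linarith
    have hD : ∑ k ∈ Finset.Ico (m+1) (2*m+2), (-1:ℝ)^k * ((2*m+1).choose k : ℝ)
        = -((-1)^m * ((2*m).choose m : ℝ)) := by
      have h1 := alt_full m
      have h2 := alt_partial (2*m) m
      have h3 : ∑ k ∈ range (m+1), (-1:ℝ)^k * ((2*m+1).choose k : ℝ)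
          + ∑ k ∈ Finset.Ico (m+1) (2*m+2), (-1:ℝ)^k * ((2*m+1).choose k : ℝ)
          = ∑ k ∈ range (2*m+2), (-1:ℝ)^k * ((2*m+1).choose k : ℝ) := by
        rw [Finset.range_eq_Ico, Finset.range_eq_Ico]
        exact Finset.sum_Ico_consecutive _ (Nat.zero_le (m+1)) (by omega : m+1 ≤ 2*m+2)
      rw [h1] at h3
      have h2' : ∑ k ∈ range (m+1), (-1:ℝ)^k * ((2*m+1).choose k : ℝ)
          = (-1)^m * ((2*m).choose m : ℝ) := h2
      linarith
    have hsum : pr Q0 (fun x => 2 * cnt x > 2*m+1)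
        = c/2 * 4^m + c/2 * (-((-1)^m * ((2*m).choose m : ℝ))) := by
      rw [hpr, hsplit, Finset.sum_congr rfl hterm, Finset.sum_add_distrib,
        ← Finset.mul_sum, ← Finset.mul_sum, hA, hD]
    have hc2 : c/2 = (1/2:ℝ)^(2*m+1) := by
      rw [hc, show 2*m+1-1 = 2*m by omega, pow_succ]
      ring
    have hhalf : c/2 * 4^m = 1/2 := by
      rw [hc2, pow_succ, pow_mul]
      have h14 : ((1/2:ℝ)^2)^m * 4^m = 1 := by rw [← mul_pow]; norm_num
      calc ((1/2:ℝ)^2)^m * (1/2) * 4^m = ((1/2:ℝ)^2)^m * 4^m * (1/2) := by ring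
        _ = 1/2 := by rw [h14]; ring
    set B : ℝ := ((2*m).choose m : ℝ) with hB
    have hBpos : 0 < B := by
      rw [hB]
      exact_mod_cast Nat.choose_pos (by omega)
    have habs : |pr Q0 (fun x => 2 * cnt x > 2*m+1) - 1/2| = (1/2)^(2*m+1) * B := by
      rw [hsum, hhalf, hc2]
      have : (1/2:ℝ)^(2*m+1) * (-((-1)^m * B)) = ((1/2)^(2*m+1) * B) * (-(-1)^m) := by ring
      rw [add_sub_cancel_left, this, abs_mul]
      rw [abs_of_nonneg (by positivity : (0:ℝ) ≤ (1/2)^(2*m+1) * B)]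
      have : |(-(-1:ℝ)^m)| = 1 := by
        rw [abs_neg, abs_pow, abs_neg, abs_one, one_pow]
      rw [this, mul_one]
    rw [ge_iff_le, habs]
    -- final inequality : 1/(3 √(2m+1)) ≤ (1/2)^(2m+1) * B
    have hcast : ((2*m+1 : ℕ) : ℝ) = 2*(m:ℝ)+1 := by push_cast; ring
    rcases Nat.eq_zero_or_pos m with h0 | hm1
    · subst h0
      have h1 : ((2*0+1 : ℕ) : ℝ) = 1 := by norm_num
      rw [h1, Real.sqrt_one]
      simp only [hB]
      norm_num
    · -- m ≥ 1
      have hBeq : (Nat.centralBinom m : ℝ) = B := by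
        rw [hB, Nat.centralBinom]
      have hnat := centralBinom_lb m hm1
      have hreal : (16:ℝ)^m ≤ 4 * m * B^2 := by
        have := (Nat.cast_le (α := ℝ)).mpr hnat
        push_cast at this
        rw [hBeq] at this
        convert this using 1
      have hmR : (0:ℝ) ≤ (m:ℝ) := by positivity
      have hsq1 : Real.sqrt ((16:ℝ)^m) = 4^m := by
        rw [show (16:ℝ)^m = (4^m)^2 by rw [← pow_mul, mul_comm m 2, pow_mul]; norm_num]
        exact Real.sqrt_sq (by positivity)
      have hsq2 : Real.sqrt (4 * m * B^2) = 2 * Real.sqrt m * B := by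
        rw [show (4:ℝ) * m * B^2 = (2 * Real.sqrt m * B)^2 by
          rw [mul_pow, mul_pow, Real.sq_sqrt hmR]; ring]
        exact Real.sqrt_sq (by positivity)
      have h4m : (4:ℝ)^m ≤ 2 * Real.sqrt m * B := by
        rw [← hsq1, ← hsq2]
        exact Real.sqrt_le_sqrt hreal
      have hkey : (2:ℝ)^(2*m+1) ≤ 3 * Real.sqrt ((2*m+1 : ℕ) : ℝ) * B := by
        have e1 : (2:ℝ)^(2*m+1) = 2 * 4^m := by
          rw [pow_succ, pow_mul]; norm_num; ring
        have e2 : (4:ℝ) * Real.sqrt m = Real.sqrt (16 * m) := by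
          rw [show (16:ℝ)*m = 4^2 * m by ring, Real.sqrt_mul (by norm_num : (0:ℝ) ≤ 4^2),
            Real.sqrt_sq (by norm_num : (0:ℝ) ≤ 4)]
        have e3 : (3:ℝ) * Real.sqrt ((2*m+1 : ℕ) : ℝ) = Real.sqrt (9 * (2*(m:ℝ)+1)) := by
          rw [hcast, show (9:ℝ)*(2*(m:ℝ)+1) = 3^2 * (2*(m:ℝ)+1) by ring,
            Real.sqrt_mul (by norm_num : (0:ℝ) ≤ 3^2),
            Real.sqrt_sq (by norm_num : (0:ℝ) ≤ 3)]
        have e4 : Real.sqrt (16 * (m:ℝ)) ≤ Real.sqrt (9 * (2*(m:ℝ)+1)) := by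
          apply Real.sqrt_le_sqrt
          linarith
        calc (2:ℝ)^(2*m+1) = 2 * 4^m := e1
          _ ≤ 2 * (2 * Real.sqrt m * B) := by linarith
          _ = (4 * Real.sqrt m) * B := by ring
          _ ≤ (3 * Real.sqrt ((2*m+1 : ℕ) : ℝ)) * B := by
              rw [e2, e3]
              exact mul_le_mul_of_nonneg_right e4 (le_of_lt hBpos)
          _ = 3 * Real.sqrt ((2*m+1 : ℕ) : ℝ) * B := by ring
      have hsqrtpos : 0 < Real.sqrt ((2*m+1 : ℕ) : ℝ) := by
        rw [hcast]
        apply Real.sqrt_pos.mpr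
        positivity
      rw [div_le_iff₀ (by positivity : (0:ℝ) < 3 * Real.sqrt ((2*m+1:ℕ):ℝ))]
      have hpow : (1/2:ℝ)^(2*m+1) * 2^(2*m+1) = 1 := by rw [← mul_pow]; norm_num
      calc (1:ℝ) = (1/2)^(2*m+1) * 2^(2*m+1) := hpow.symm
        _ ≤ (1/2)^(2*m+1) * (3 * Real.sqrt ((2*m+1:ℕ):ℝ) * B) :=
            mul_le_mul_of_nonneg_left hkey (by positivity)
        _ = (1/2)^(2*m+1) * B * (3 * Real.sqrt ((2*m+1:ℕ):ℝ)) := by ring
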